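/- Assume 2θ ≤ ψ₂ − ψ₁. Then for every α > 0 and every s ∈ ℝ one has |γ̃_α(s) − γ̃_α′(s)·(s − proj_K(s))| ≤ 3θ/α. -/

import Mathlib

open MeasureTheory

/-- The metric projection of `ℝ` onto the interval `K = [ψ₁, ψ₂]`. -/
noncomputable def projK (ψ₁ ψ₂ s : ℝ) : ℝ := max ψ₁ (min s ψ₂)

/-- The Yosida approximation `γ_α(s) = (1/α)(s − proj_K(s))`. -/
noncomputable def yosida (ψ₁ ψ₂ α s : ℝ) : ℝ := (1 / α) * (s - projK ψ₁ ψ₂ s)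

/-- The rescaled mollifier `ζ_ε(s) = (1/ε)·ζ(s/ε)`. -/
noncomputable def scaledMollifier (ζ : ℝ → ℝ) (ε s : ℝ) : ℝ := (1 / ε) * ζ (s / ε)

/-- The mollified Yosida approximation `γ̃_α = γ_α * ζ_θ` (convolution over `ℝ`
with respect to Lebesgue measure). -/
noncomputable def mollifiedYosida (ψ₁ ψ₂ α θ : ℝ) (ζ : ℝ → ℝ) (s : ℝ) : ℝ :=
  ∫ t, yosida ψ₁ ψ₂ α (s - t) * scaledMollifier ζ θ t

lemma pi_lip (ψ₁ ψ₂ x y : ℝ) :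
    |(x - projK ψ₁ ψ₂ x) - (y - projK ψ₁ ψ₂ y)| ≤ |x - y| := by
  have h1 := le_abs_self (x - y)
  have h2 := neg_abs_le (x - y)
  simp only [projK, max_def, min_def]
  split_ifs <;> rw [abs_le] <;> constructor <;> linarith

lemma continuous_yosida (ψ₁ ψ₂ α : ℝ) : Continuous (yosida ψ₁ ψ₂ α) := by
  unfold yosida projK; fun_prop

theorem mollifiedYosida_sub_deriv_mul_dist_bound
    (ψ₁ ψ₂ θ : ℝ) (hψ₁ : ψ₁ < 0) (hψ₂ : 0 < ψ₂) (hθ : 0 < θ)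
    (h2θ : 2 * θ ≤ ψ₂ - ψ₁)
    (ζ : ℝ → ℝ) (hζC : ContDiff ℝ 1 ζ)
    (hζsupp : Function.support ζ ⊆ Set.Icc (-1) 1)
    (hζint : ∫ t, ζ t = 1) (hζ0 : ∀ t, 0 ≤ ζ t) (hζ1 : ∀ t, ζ t ≤ 1) :
    ∀ α, 0 < α → ∀ s,
      |mollifiedYosida ψ₁ ψ₂ α θ ζ s -
          deriv (mollifiedYosida ψ₁ ψ₂ α θ ζ) s * (s - projK ψ₁ ψ₂ s)| ≤ 3 * θ / α := by
  intro α hα s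
  have hψ12 : ψ₁ ≤ ψ₂ := le_of_lt (lt_trans hψ₁ hψ₂)
  set Z : ℝ → ℝ := scaledMollifier ζ θ with hZdef
  set G : ℝ → ℝ := mollifiedYosida ψ₁ ψ₂ α θ ζ with hGdef
  set y : ℝ → ℝ := yosida ψ₁ ψ₂ α with hydef
  have hGint : ∀ u, G u = ∫ t, y (u - t) * Z t := fun u => rfl
  have habs : ∀ f : ℝ → ℝ, |∫ t, f t| ≤ ∫ t, |f t| := by
    intro f
    simpa [Real.norm_eq_abs] using
      norm_integral_le_integral_norm (μ := (volume : Measure ℝ)) f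
  -- basic facts about Z
  have hZcont : Continuous Z := by
    have h := hζC.continuous
    unfold Z; unfold scaledMollifier; fun_prop
  have hZ0 : ∀ t, 0 ≤ Z t := fun t =>
    mul_nonneg (by positivity) (hζ0 _)
  have hZsupp : ∀ t, Z t ≠ 0 → |t| ≤ θ := by
    intro t ht
    have hζne : ζ (t / θ) ≠ 0 := by
      intro h
      exact ht (by simp [hZdef, scaledMollifier, h])
    have hmem := hζsupp hζne
    rw [Set.mem_Icc] at hmem
    rw [abs_le]
    constructor
    · have := (le_div_iff₀ hθ).mp hmem.1; linarith
    · have := (div_le_one hθ).mp hmem.2; linarith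
  have hZcs : HasCompactSupport Z := by
    apply HasCompactSupport.intro (isCompact_Icc (a := -θ) (b := θ))
    intro x hx
    by_contra h
    exact hx (Set.mem_Icc.mpr (abs_le.mp (hZsupp x h)))
  have hZint1 : ∫ t, Z t = 1 := by
    have h : ∫ t, Z t = (1/θ) * ∫ t, ζ (t / θ) := by
      simp only [hZdef, scaledMollifier]
      exact integral_const_mul _ _
    rw [h, Measure.integral_comp_div ζ θ, hζint]
    rw [abs_of_pos hθ]
    simp
    field_simp
  -- integrability of g * Z for continuous g
  have hInt : ∀ g : ℝ → ℝ, Continuous g → Integrable (fun t => g t * Z t) := by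
    intro g hg
    apply Continuous.integrable_of_hasCompactSupport (hg.mul hZcont)
    exact hZcs.mul_left
  have hyc : Continuous y := continuous_yosida ψ₁ ψ₂ α
  -- Lipschitz bound for yosida
  have hyLip : ∀ a b : ℝ, |y a - y b| ≤ (1/α) * |a - b| := by
    intro a b
    simp only [hydef, yosida, ← mul_sub, abs_mul]
    rw [abs_of_pos (by positivity : (0:ℝ) < 1/α)]
    exact mul_le_mul_of_nonneg_left (pi_lip ψ₁ ψ₂ a b) (by positivity)
  -- G is (1/α)-Lipschitz
  have hGlip : ∀ a b : ℝ, |G a - G b| ≤ (1/α) * |a - b| := by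
    intro a b
    rw [hGint a, hGint b, ← integral_sub (hInt _ (by fun_prop)) (hInt _ (by fun_prop))]
    refine (habs _).trans ?_
    have h2 : ∫ t, |y (a - t) * Z t - y (b - t) * Z t|
        ≤ ∫ t, ((1/α) * |a - b|) * Z t := by
      apply integral_mono ((hInt (fun t => y (a - t)) (by fun_prop)).sub
        (hInt (fun t => y (b - t)) (by fun_prop))).abs
        (hInt (fun _ => (1/α) * |a - b|) continuous_const)
      intro t
      show |y (a - t) * Z t - y (b - t) * Z t| ≤ (1/α) * |a - b| * Z t
      have he : y (a - t) * Z t - y (b - t) * Z t = (y (a - t) - y (b - t)) * Z t := by ring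
      rw [he, abs_mul, abs_of_nonneg (hZ0 t)]
      apply mul_le_mul_of_nonneg_right _ (hZ0 t)
      have h3 := hyLip (a - t) (b - t)
      have h4 : a - t - (b - t) = a - b := by ring
      rwa [h4] at h3
    refine h2.trans (le_of_eq ?_)
    rw [integral_const_mul, hZint1, mul_one]
  -- derivative bound
  have hGd : ∀ u : ℝ, |deriv G u| ≤ 1/α := by
    intro u
    have hlip : LipschitzWith ⟨1/α, by positivity⟩ G := by
      apply LipschitzWith.of_dist_le_mul
      intro a b
      simp only [Real.dist_eq]
      exact hGlip a b
    have h := norm_deriv_le_of_lipschitz (𝕜 := ℝ) (x₀ := u) hlip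
    have h' : ‖deriv G u‖ ≤ 1/α := h
    simpa [Real.norm_eq_abs] using h'
  -- closeness of G to yosida
  have hclose : ∀ x : ℝ, |G x - y x| ≤ θ/α := by
    intro x
    have key : ∫ t, y x * Z t = y x := by rw [integral_const_mul, hZint1, mul_one]
    have hx : G x - y x = ∫ t, (y (x - t) - y x) * Z t := by
      calc G x - y x = (∫ t, y (x - t) * Z t) - ∫ t, y x * Z t := by rw [hGint x, key]
        _ = ∫ t, (y (x - t) * Z t - y x * Z t) :=
            (integral_sub (hInt _ (by fun_prop)) (hInt _ continuous_const)).symm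
        _ = ∫ t, (y (x - t) - y x) * Z t := by congr 1; funext t; ring
    rw [hx]
    refine (habs _).trans ?_
    have h2 : ∫ t, |(y (x - t) - y x) * Z t| ≤ ∫ t, (θ/α) * Z t := by
      apply integral_mono (hInt (fun t => y (x - t) - y x) (by fun_prop)).abs
        (hInt (fun _ => θ/α) continuous_const)
      · intro t
        show |(y (x - t) - y x) * Z t| ≤ (θ/α) * Z t
        rw [abs_mul, abs_of_nonneg (hZ0 t)]
        by_cases hz : Z t = 0
        · simp [hz]
        · apply mul_le_mul_of_nonneg_right _ (hZ0 t)
          have h3 := hyLip (x - t) x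
          have h4 := hZsupp t hz
          have h5 : |x - t - x| = |t| := by rw [show x - t - x = -t by ring, abs_neg]
          rw [h5] at h3
          calc |y (x - t) - y x| ≤ (1/α) * |t| := h3
            _ ≤ (1/α) * θ := mul_le_mul_of_nonneg_left h4 (by positivity)
            _ = θ/α := by ring
    refine h2.trans (le_of_eq ?_)
    rw [integral_const_mul, hZint1, mul_one]
  -- the first moment
  set m : ℝ := ∫ t, t * Z t with hmdef
  have hm : |m| ≤ θ := by
    refine (habs _).trans ?_
    have h2 : ∫ t, |t * Z t| ≤ ∫ t, θ * Z t := by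
      apply integral_mono (hInt (fun t => t) continuous_id).abs
        (hInt (fun _ => θ) continuous_const)
      intro t
      show |t * Z t| ≤ θ * Z t
      rw [abs_mul, abs_of_nonneg (hZ0 t)]
      by_cases hz : Z t = 0
      · simp [hz]
      · exact mul_le_mul_of_nonneg_right (hZsupp t hz) (hZ0 t)
    refine h2.trans (le_of_eq ?_)
    rw [integral_const_mul, hZint1, mul_one]
  have hθα : (0:ℝ) < θ/α := div_pos hθ hα
  -- case analysis
  by_cases hs1 : ψ₂ + θ < s
  · -- right region: G is linear near s
    have heq : ∀ u ∈ Set.Ioi (ψ₂ + θ), G u = (u - ψ₂ - m) / α := by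
      intro u hu
      rw [Set.mem_Ioi] at hu
      have h1 : G u = ∫ t, ((1/α) * ((u - ψ₂) * Z t) - (1/α) * (t * Z t)) := by
        rw [hGint u]
        congr 1; funext t
        by_cases hz : Z t = 0
        · simp [hz]
        · have h4 := abs_le.mp (hZsupp t hz)
          have hut : ψ₂ ≤ u - t := by linarith
          have hproj : projK ψ₁ ψ₂ (u - t) = ψ₂ := by
            unfold projK
            rw [min_eq_right hut, max_eq_right hψ12]
          simp only [hydef, yosida, hproj]
          ring
      rw [h1, integral_sub ((hInt (fun _ => (u - ψ₂)) continuous_const).const_mul _)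
        ((hInt (fun t => t) continuous_id).const_mul _)]
      rw [integral_const_mul, integral_const_mul, integral_const_mul, hZint1, ← hmdef]
      field_simp
      try ring
    have hGs : G s = (s - ψ₂ - m) / α := heq s hs1
    have hD : deriv G s = 1/α := by
      have hev : G =ᶠ[nhds s] (fun u => (u - ψ₂ - m) / α) := by
        filter_upwards [Ioi_mem_nhds hs1] with u hu
        exact heq u hu
      rw [hev.deriv_eq]
      have hda : HasDerivAt (fun u : ℝ => (u - ψ₂ - m) / α) ((1:ℝ)/α) s := by
        have h := ((hasDerivAt_id s).sub_const (ψ₂ + m)).div_const α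
        simpa [sub_sub] using h
      exact hda.deriv
    have hproj : projK ψ₁ ψ₂ s = ψ₂ := by
      unfold projK
      rw [min_eq_right (by linarith), max_eq_right hψ12]
    rw [hGs, hD, hproj]
    have he : (s - ψ₂ - m) / α - 1/α * (s - ψ₂) = -(m/α) := by field_simp; try ring
    rw [he, abs_neg, abs_div, abs_of_pos hα]
    have h9 : |m| ≤ 3 * θ := by linarith
    gcongr
  · by_cases hs2 : s < ψ₁ - θ
    · -- left region
      have heq : ∀ u ∈ Set.Iio (ψ₁ - θ), G u = (u - ψ₁ - m) / α := by
        intro u hu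
        rw [Set.mem_Iio] at hu
        have h1 : G u = ∫ t, ((1/α) * ((u - ψ₁) * Z t) - (1/α) * (t * Z t)) := by
          rw [hGint u]
          congr 1; funext t
          by_cases hz : Z t = 0
          · simp [hz]
          · have h4 := abs_le.mp (hZsupp t hz)
            have hut : u - t ≤ ψ₁ := by linarith
            have hproj : projK ψ₁ ψ₂ (u - t) = ψ₁ := by
              unfold projK
              rw [min_eq_left (by linarith), max_eq_left hut]
            simp only [hydef, yosida, hproj]
            ring
        rw [h1, integral_sub ((hInt (fun _ => (u - ψ₁)) continuous_const).const_mul _)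
          ((hInt (fun t => t) continuous_id).const_mul _)]
        rw [integral_const_mul, integral_const_mul, integral_const_mul, hZint1, ← hmdef]
        field_simp
        try ring
      have hGs : G s = (s - ψ₁ - m) / α := heq s hs2
      have hD : deriv G s = 1/α := by
        have hev : G =ᶠ[nhds s] (fun u => (u - ψ₁ - m) / α) := by
          filter_upwards [Iio_mem_nhds hs2] with u hu
          exact heq u hu
        rw [hev.deriv_eq]
        have hda : HasDerivAt (fun u : ℝ => (u - ψ₁ - m) / α) ((1:ℝ)/α) s := by
          have h := ((hasDerivAt_id s).sub_const (ψ₁ + m)).div_const α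
          simpa [sub_sub] using h
        exact hda.deriv
      have hproj : projK ψ₁ ψ₂ s = ψ₁ := by
        unfold projK
        rw [min_eq_left (by linarith), max_eq_left (by linarith)]
      rw [hGs, hD, hproj]
      have he : (s - ψ₁ - m) / α - 1/α * (s - ψ₁) = -(m/α) := by field_simp; try ring
      rw [he, abs_neg, abs_div, abs_of_pos hα]
      have h9 : |m| ≤ 3 * θ := by linarith
      gcongr
    · -- middle region
      push_neg at hs1 hs2
      have hπ : |s - projK ψ₁ ψ₂ s| ≤ θ := by
        rw [abs_le]
        unfold projK
        rw [max_def, min_def]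
        split_ifs <;> constructor <;> linarith
      have hys : |y s| ≤ θ/α := by
        simp only [hydef, yosida, abs_mul]
        rw [abs_of_pos (by positivity : (0:ℝ) < 1/α)]
        calc (1/α) * |s - projK ψ₁ ψ₂ s| ≤ (1/α) * θ :=
              mul_le_mul_of_nonneg_left hπ (by positivity)
          _ = θ/α := by ring
      have hGs : |G s| ≤ 2 * (θ/α) := by
        calc |G s| = |(G s - y s) + y s| := by ring_nf
          _ ≤ |G s - y s| + |y s| := abs_add_le _ _
          _ ≤ θ/α + θ/α := add_le_add (hclose s) hys
          _ = 2 * (θ/α) := by ring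
      have hprod : |deriv G s * (s - projK ψ₁ ψ₂ s)| ≤ θ/α := by
        rw [abs_mul]
        calc |deriv G s| * |s - projK ψ₁ ψ₂ s| ≤ (1/α) * θ := by
              apply mul_le_mul (hGd s) hπ (abs_nonneg _) (by positivity)
          _ = θ/α := by ring
      calc |G s - deriv G s * (s - projK ψ₁ ψ₂ s)|
          ≤ |G s| + |deriv G s * (s - projK ψ₁ ψ₂ s)| := abs_sub _ _
        _ ≤ 2 * (θ/α) + θ/α := add_le_add hGs hprod
        _ = 3 * θ / α := by ring
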